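/- For the inverse log-polynomial spectrum λ_k = 1/(k log^β(k+1)) with β > 1 and constant c₁ > 0, the effective dimension k₁(n) = min{ l ≥ 0 : λ_{l+1} ≤ c₁(Σ_{i≥1}λ_i)/n } satisfies k₁(n) = Θ(n / log^β n). -/

import Mathlib

open Real Filter

private lemma bert_summable (β : ℝ) (hβ : 1 < β) :
    Summable (fun l : ℕ => 1 / (((l:ℝ)+1) * (Real.log ((l:ℝ)+2))^β)) := by
  have hβ0 : (0:ℝ) ≤ β := by linarith
  set f : ℕ → ℝ := fun l => 1 / (((l:ℝ)+1) * (Real.log ((l:ℝ)+2))^β) with hf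
  have hlog : ∀ l : ℕ, 0 < Real.log ((l:ℝ)+2) := by
    intro l
    apply Real.log_pos
    have : (0:ℝ) ≤ (l:ℝ) := Nat.cast_nonneg l
    linarith
  have hden : ∀ l : ℕ, 0 < ((l:ℝ)+1) * (Real.log ((l:ℝ)+2))^β := by
    intro l
    have h1 : (0:ℝ) < (l:ℝ)+1 := by positivity
    exact mul_pos h1 (Real.rpow_pos_of_pos (hlog l) β)
  have hpos : ∀ l : ℕ, 0 < f l := fun l => one_div_pos.mpr (hden l)
  have hanti : ∀ ⦃m n : ℕ⦄, 0 < m → m ≤ n → f n ≤ f m := by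
    intro m n _ hmn
    apply one_div_le_one_div_of_le (hden m)
    have hc : (m:ℝ) ≤ (n:ℝ) := Nat.cast_le.mpr hmn
    have hlm : Real.log ((m:ℝ)+2) ≤ Real.log ((n:ℝ)+2) := by
      apply Real.log_le_log (by positivity)
      linarith
    apply mul_le_mul (by linarith) (Real.rpow_le_rpow (hlog m).le hlm hβ0)
      (Real.rpow_pos_of_pos (hlog m) β).le (by positivity)
  rw [← summable_condensed_iff_of_nonneg (fun l => (hpos l).le) hanti]
  rw [← summable_nat_add_iff 1]
  have hl2 : (0:ℝ) < Real.log 2 := Real.log_pos one_lt_two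
  have hg : Summable (fun k : ℕ => ((((k:ℝ))+1) * Real.log 2)^(-β)) := by
    have h1 : Summable (fun k : ℕ => (((k:ℝ)+1))^(-β)) := by
      have := (summable_nat_add_iff (f := fun n : ℕ => ((n:ℝ))^(-β)) 1).mpr
        (Real.summable_nat_rpow.mpr (by linarith))
      refine this.congr fun k => ?_
      push_cast; ring_nf
    refine (h1.mul_left ((Real.log 2)^(-β))).congr fun k => ?_
    rw [Real.mul_rpow (by positivity) hl2.le]
    ring
  refine Summable.of_nonneg_of_le (fun k => ?_) (fun k => ?_) hg
  · have := hpos (2^(k+1)); positivity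
  · set x : ℝ := (2:ℝ)^(k+1) with hxdef
    have hxc : (((2:ℕ)^(k+1) : ℕ) : ℝ) = x := by push_cast; ring
    have hx2 : (2:ℝ) ≤ x := by
      calc (2:ℝ) = 2^1 := (pow_one 2).symm
      _ ≤ x := pow_le_pow_right₀ one_le_two (by omega)
    have hflog : ((k:ℝ)+1) * Real.log 2 ≤ Real.log (x+2) := by
      have h1 : Real.log (x) ≤ Real.log (x+2) := Real.log_le_log (by linarith) (by linarith)
      have h2 : Real.log x = ((k:ℝ)+1) * Real.log 2 := by
        rw [hxdef, Real.log_pow]; push_cast; ring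
      linarith
    have hMb : (0:ℝ) < (((k:ℝ)+1) * Real.log 2)^β := Real.rpow_pos_of_pos (by positivity) β
    have hLb : (((k:ℝ)+1) * Real.log 2)^β ≤ (Real.log (x+2))^β :=
      Real.rpow_le_rpow (by positivity) hflog hβ0
    have hfval : f (2^(k+1)) = 1 / ((x+1) * (Real.log (x+2))^β) := by
      rw [hf, hxdef]; push_cast; ring_nf
    rw [hfval, Real.rpow_neg (by positivity), ← one_div, mul_one_div,
      div_le_div_iff₀ (by nlinarith) hMb]
    nlinarith

private lemma aux_sqrt_lower (B s n : ℝ) (hB : 0 < B) (hs0 : 0 ≤ s)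
    (hss : s*s = n) (h : 16*B^2 ≤ n) : 4*B ≤ s := by nlinarith

private lemma aux_one_le (s n : ℝ) (hs0 : 0 ≤ s) (hss : s*s = n) (h : 4 ≤ n) : 1 ≤ s := by
  nlinarith

set_option maxHeartbeats 1000000 in
/-- For the inverse log-polynomial spectrum `λ_k = 1/(k log^β(k+1))` with
`β > 1` (here `lam l = λ_{l+1}`), the effective dimension
`k₁(n) = min{l ≥ 0 : λ_{l+1} ≤ c₁ S / n}` is `Θ(n / log^β n)`. -/
theorem inverse_log_polynomial_k1 (β : ℝ) (hβ : 1 < β) (c₁ : ℝ) (hc₁ : 0 < c₁)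
    (lam : ℕ → ℝ)
    (hlam : ∀ l : ℕ, lam l =
      1 / (((l : ℝ) + 1) * (Real.log ((l : ℝ) + 2)) ^ β))
    (k₁ : ℕ → ℕ)
    (hk₁ : ∀ n, k₁ n = sInf {l : ℕ | lam l ≤ c₁ * (∑' i, lam i) / n}) :
    ∃ c C : ℝ, 0 < c ∧ c < C ∧ ∃ N : ℕ, ∀ n ≥ N,
      c * (n : ℝ) / (Real.log n) ^ β ≤ (k₁ n : ℝ) ∧
      (k₁ n : ℝ) ≤ C * (n : ℝ) / (Real.log n) ^ β := by
  have hβ0 : (0:ℝ) ≤ β := by linarith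
  have hlog : ∀ l : ℕ, 0 < Real.log ((l:ℝ)+2) := by
    intro l
    apply Real.log_pos
    have : (0:ℝ) ≤ (l:ℝ) := Nat.cast_nonneg l
    linarith
  have hden : ∀ l : ℕ, 0 < ((l:ℝ)+1) * (Real.log ((l:ℝ)+2))^β := by
    intro l
    have h1 : (0:ℝ) < (l:ℝ)+1 := by positivity
    exact mul_pos h1 (Real.rpow_pos_of_pos (hlog l) β)
  have hpos : ∀ l : ℕ, 0 < lam l := by
    intro l; rw [hlam l]; exact one_div_pos.mpr (hden l)
  have hsum : Summable lam := (bert_summable β hβ).congr (fun l => (hlam l).symm)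
  set S : ℝ := ∑' i, lam i with hSdef
  have hS0 : 0 < S := Summable.tsum_pos hsum (fun i => (hpos i).le) 0 (hpos 0)
  set B : ℝ := c₁ * S with hBdef
  have hB : 0 < B := mul_pos hc₁ hS0
  clear_value S B
  -- the little-o fact : eventually (log x)^β ≤ x^(1/2)
  obtain ⟨M, hM⟩ : ∃ M : ℝ, ∀ x ≥ M, (Real.log x)^β ≤ x^((2:ℝ)⁻¹) := by
    have hr : (0:ℝ) < (2*β)⁻¹ := by positivity
    have h := (isLittleO_log_rpow_atTop hr).bound one_pos
    have h2 : ∀ᶠ x : ℝ in atTop, (Real.log x)^β ≤ x^((2:ℝ)⁻¹) := by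
      filter_upwards [h, eventually_ge_atTop (1:ℝ)] with x hx hx1
      rw [Real.norm_eq_abs, Real.norm_eq_abs, one_mul] at hx
      have hx0 : (0:ℝ) ≤ x := by linarith
      have hlx : 0 ≤ Real.log x := Real.log_nonneg hx1
      have hxr : 0 ≤ x^((2*β)⁻¹) := Real.rpow_nonneg hx0 _
      have hle : Real.log x ≤ x^((2*β)⁻¹) := by
        rwa [abs_of_nonneg hlx, abs_of_nonneg hxr] at hx
      calc (Real.log x)^β ≤ (x^((2*β)⁻¹))^β := Real.rpow_le_rpow hlx hle hβ0
        _ = x^((2*β)⁻¹*β) := (Real.rpow_mul hx0 _ _).symm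
        _ = x^((2:ℝ)⁻¹) := by
              congr 1
              field_simp
    exact eventually_atTop.mp h2
  -- constants
  set c : ℝ := min (1/2 : ℝ) (1/(4*B)) with hcdef
  set C0 : ℝ := (2:ℝ)^β / B + 1 with hC0def
  have h2β : (0:ℝ) < (2:ℝ)^β := Real.rpow_pos_of_pos two_pos β
  have hC01 : 1 ≤ C0 := by
    have h : 0 < (2:ℝ)^β / B := div_pos h2β hB
    rw [hC0def]; linarith
  have hc0 : 0 < c := lt_min (by norm_num) (by positivity)
  have hc12 : c ≤ 1/2 := min_le_left _ _
  have hc4B : c ≤ 1/(4*B) := min_le_right _ _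
  clear_value c C0
  refine ⟨c, C0 + 1, hc0, by linarith, ?_⟩
  refine ⟨max (max ⌈M⌉₊ ⌈16*B^2⌉₊) 4, ?_⟩
  intro n hn
  have hn4 : (4:ℝ) ≤ (n:ℝ) := by
    have : 4 ≤ n := le_trans (le_max_right _ _) hn
    exact_mod_cast this
  have hn0 : (0:ℝ) < (n:ℝ) := by linarith
  have hnM : M ≤ (n:ℝ) := by
    have h1 : ⌈M⌉₊ ≤ n := le_trans (le_trans (le_max_left _ _) (le_max_left _ _)) hn
    calc M ≤ (⌈M⌉₊ : ℝ) := Nat.le_ceil M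
      _ ≤ (n:ℝ) := by exact_mod_cast h1
  have hnB : 16*B^2 ≤ (n:ℝ) := by
    have h1 : ⌈16*B^2⌉₊ ≤ n := le_trans (le_trans (le_max_right _ _) (le_max_left _ _)) hn
    calc 16*B^2 ≤ (⌈16*B^2⌉₊ : ℝ) := Nat.le_ceil _
      _ ≤ (n:ℝ) := by exact_mod_cast h1
  have hln1 : 1 ≤ Real.log n := by
    rw [Real.le_log_iff_exp_le hn0]
    have := Real.exp_one_lt_d9
    linarith
  set L : ℝ := (Real.log n)^β with hLdef
  have hL1 : 1 ≤ L := by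
    calc (1:ℝ) = 1^β := (Real.one_rpow β).symm
      _ ≤ L := Real.rpow_le_rpow zero_le_one hln1 hβ0
  have hL0 : 0 < L := by linarith
  set s : ℝ := (n:ℝ)^((2:ℝ)⁻¹) with hsdef
  have hs0 : 0 ≤ s := Real.rpow_nonneg hn0.le _
  have hss : s * s = (n:ℝ) := by
    rw [hsdef, ← Real.rpow_add hn0]
    norm_num
  have hlogs : Real.log s = 2⁻¹ * Real.log n := Real.log_rpow hn0 _
  have hLs : L ≤ s := hM n hnM
  clear_value L s
  have hs4B : 4*B ≤ s := aux_sqrt_lower B s n hB hs0 hss hnB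
  have hs1 : 1 ≤ s := aux_one_le s n hs0 hss hn4
  have hs0' : (0:ℝ) < s := lt_of_lt_of_le one_pos hs1
  -- membership characterization
  have hmem : ∀ l : ℕ, lam l ≤ B / (n:ℝ) ↔
      (n:ℝ) ≤ B * (((l:ℝ)+1) * (Real.log ((l:ℝ)+2))^β) := by
    intro l
    rw [hlam l, div_le_div_iff₀ (hden l) hn0, one_mul]
  -- the set is nonempty
  have hne : {l : ℕ | lam l ≤ B / (n:ℝ)}.Nonempty := by
    have ht : Filter.Tendsto lam atTop (nhds 0) := hsum.tendsto_atTop_zero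
    obtain ⟨l, hl⟩ := (ht.eventually (gt_mem_nhds (div_pos hB hn0))).exists
    exact ⟨l, hl.le⟩
  have hkval : k₁ n = sInf {l : ℕ | lam l ≤ B / (n:ℝ)} := hk₁ n
  have hkmem : lam (k₁ n) ≤ B / (n:ℝ) := by
    rw [hkval]; exact Nat.sInf_mem hne
  have hkB : (n:ℝ) ≤ B * (((k₁ n : ℝ)+1) * (Real.log ((k₁ n : ℝ)+2))^β) :=
    (hmem (k₁ n)).mp hkmem
  constructor
  · -- lower bound
    by_contra hcon
    push_neg at hcon
    set k : ℝ := (k₁ n : ℝ) with hkdef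
    have hk0 : 0 ≤ k := Nat.cast_nonneg _
    have hcnL : c * n / L ≤ n/2 := by
      rw [div_le_iff₀ hL0]
      have e1 : c * (n:ℝ) ≤ (1/2) * n := mul_le_mul_of_nonneg_right hc12 hn0.le
      have e2 : ((n:ℝ)/2) * 1 ≤ (n:ℝ)/2 * L := by
        apply mul_le_mul_of_nonneg_left hL1; positivity
      linarith
    have hk2n : k + 2 ≤ (n:ℝ) := by
      have h2 : (2:ℝ) ≤ n/2 := by linarith
      linarith
    have hlk : Real.log (k+2) ≤ Real.log n := Real.log_le_log (by positivity) hk2n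
    have hLk : (Real.log (k+2))^β ≤ L :=
      (Real.rpow_le_rpow (hlog (k₁ n)).le hlk hβ0).trans_eq hLdef.symm
    have h1 : (k+1) * (Real.log (k+2))^β ≤ (c*n/L+1)*L := by
      apply mul_le_mul (by linarith) hLk (Real.rpow_pos_of_pos (hlog (k₁ n)) β).le
      positivity
    have h2 : (c*n/L+1)*L = c*n + L := by field_simp
    have h3 : B*L ≤ n/4 := by
      have e1 : B*L ≤ B*s := mul_le_mul_of_nonneg_left hLs hB.le
      have e2 : 4*B*s ≤ s*s := mul_le_mul_of_nonneg_right hs4B hs0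
      linarith [hss ▸ e2]
    have h4 : B*(c*n) ≤ n/4 := by
      have hbc : B*c ≤ 1/4 := by
        have e1 : B*c ≤ B*(1/(4*B)) := mul_le_mul_of_nonneg_left hc4B hB.le
        have e2 : B*(1/(4*B)) = 1/4 := by field_simp; try ring
        linarith
      have e3 : (B*c)*n ≤ (1/4)*n := mul_le_mul_of_nonneg_right hbc hn0.le
      linarith [mul_assoc B c (n:ℝ)]
    have h5 : B * ((k+1) * (Real.log (k+2))^β) ≤ B*(c*n) + B*L := by
      have := mul_le_mul_of_nonneg_left (h1.trans_eq h2) hB.le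
      linarith [mul_add B (c*(n:ℝ)) L]
    linarith
  · -- upper bound
    set x₀ : ℝ := C0 * n / L with hx₀def
    clear_value x₀
    have hC00 : 0 < C0 := by linarith
    have hx₀0 : 0 ≤ x₀ := by rw [hx₀def]; positivity
    set l₀ : ℕ := ⌈x₀⌉₊ with hl₀def
    have hl₀ge : x₀ ≤ (l₀:ℝ) := Nat.le_ceil _
    have hl₀lt : (l₀:ℝ) < x₀ + 1 := Nat.ceil_lt_add_one hx₀0
    have hnL : s ≤ (n:ℝ) / L := by
      rw [le_div_iff₀ hL0]
      calc s * L ≤ s * s := mul_le_mul_of_nonneg_left hLs hs0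
        _ = (n:ℝ) := hss
    have hnL1 : (n:ℝ)/L ≤ x₀ := by
      rw [hx₀def, div_le_div_iff₀ hL0 hL0]
      have hnC0 : (n:ℝ) ≤ C0 * n := by
        have := mul_le_mul_of_nonneg_right hC01 hn0.le
        linarith
      exact mul_le_mul_of_nonneg_right hnC0 hL0.le
    have hsx₀ : s ≤ x₀ := hnL.trans hnL1
    have hl₀2 : s ≤ (l₀:ℝ)+2 := by linarith
    have hlogl₀ : 2⁻¹ * Real.log n ≤ Real.log ((l₀:ℝ)+2) := by
      rw [← hlogs]; exact Real.log_le_log hs0' hl₀2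
    have hln0 : (0:ℝ) ≤ Real.log n := by linarith
    have hrp : ((2:ℝ)⁻¹ * Real.log n)^β ≤ (Real.log ((l₀:ℝ)+2))^β :=
      Real.rpow_le_rpow (by positivity) hlogl₀ hβ0
    have hmul : ((2:ℝ)⁻¹ * Real.log n)^β = ((2:ℝ)⁻¹)^β * L :=
      (Real.mul_rpow (by norm_num) hln0).trans (by rw [hLdef])
    have hinv : ((2:ℝ)⁻¹)^β = ((2:ℝ)^β)⁻¹ := Real.inv_rpow (by norm_num) β
    have h2βi : (0:ℝ) < ((2:ℝ)⁻¹)^β := Real.rpow_pos_of_pos (by norm_num) β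
    have hl₀mem : (n:ℝ) ≤ B * (((l₀:ℝ)+1) * (Real.log ((l₀:ℝ)+2))^β) := by
      have e2 : x₀ * (((2:ℝ)⁻¹)^β * L) ≤ ((l₀:ℝ)+1) * (Real.log ((l₀:ℝ)+2))^β := by
        apply mul_le_mul (by linarith) (by rw [← hmul]; exact hrp) (by positivity) (by positivity)
      have e1 : x₀ * (((2:ℝ)⁻¹)^β * L) = C0 * n * ((2:ℝ)⁻¹)^β := by
        rw [hx₀def]; field_simp; try ring
      have e3 : (n:ℝ) ≤ B * (C0 * n * ((2:ℝ)⁻¹)^β) := by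
        have hBC : 1 ≤ B * C0 * ((2:ℝ)⁻¹)^β := by
          have e4 : B*C0 = (2:ℝ)^β + B := by rw [hC0def]; field_simp; try ring
          rw [hinv, ← div_eq_mul_inv, le_div_iff₀ h2β, one_mul, e4]
          linarith
        have h5 := mul_le_mul_of_nonneg_right hBC hn0.le
        calc (n:ℝ) = 1 * n := (one_mul _).symm
          _ ≤ B * C0 * ((2:ℝ)⁻¹)^β * n := h5
          _ = B * (C0 * n * ((2:ℝ)⁻¹)^β) := by ring
      calc (n:ℝ) ≤ B * (C0 * n * ((2:ℝ)⁻¹)^β) := e3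
        _ = B * (x₀ * (((2:ℝ)⁻¹)^β * L)) := by rw [e1]
        _ ≤ B * (((l₀:ℝ)+1) * (Real.log ((l₀:ℝ)+2))^β) :=
            mul_le_mul_of_nonneg_left e2 hB.le
    have hkle : k₁ n ≤ l₀ := by
      rw [hkval]; exact Nat.sInf_le ((hmem l₀).mpr hl₀mem)
    have hfin : (k₁ n : ℝ) ≤ x₀ + 1 := le_trans (Nat.cast_le.mpr hkle) hl₀lt.le
    have hnL2 : 1 ≤ (n:ℝ)/L := le_trans hs1 hnL
    have hsplit : (C0+1) * n / L = C0*n/L + n/L := by ring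
    calc (k₁ n : ℝ) ≤ x₀ + 1 := hfin
      _ ≤ (C0+1) * n / L := by rw [hsplit, hx₀def]; linarith
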